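/- Identify F₃ = {−1,0,1} and let E = F₃ × F₃, with A_i = {(x,i)}, B_j = {(j,y)}, C_i = {(x,y) : x − y = i}, D_j = {(x,y) : x + y = j}. Let 𝒞 be a family of 5-element subsets of E such that any two distinct members of 𝒞 intersect in at most 3 elements, A_i ∪ B_j ∈ 𝒞 for every (i,j) ≠ (0,0), and the five sets C₀ ∪ D_{−1}, C₀ ∪ D₀, C₀ ∪ D₁, A₁ ∪ B₁, ((A₀ ∪ B₀) ∖ {(0,0)}) ∪ {(1,1)} all belong to 𝒞. Let f be the rank function of the sparse paving matroid of rank 5 with circuit-hyperplane family 𝒞, and define the contraction h on subsets of E ∖ {(1,1)} by h(X) = f(X ∪ {(1,1)}) − 1. Then the four 2-element sets L₀ = {(0,−1),(−1,0)}, L₁ = {(0,1),(1,0)}, L₂ = {(−1,−1),(0,0)}, L₃ = {(1,−1),(−1,1)} form a Vámos configuration in h: h(Lᵢ) = 2 for each i; h(L₀∪L₁) = h(L₀∪L₂) = h(L₁∪L₂) = h(L₁∪L₃) = h(L₂∪L₃) = 3; h(L₀∪L₃) = 4; and h of every union of three or all four of them equals 4. In particular, such matroids are not almost entropic. -/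
import Mathlib


open Finset

/-- The sets `L₀, L₁, L₂, L₃` form a Vámos configuration in the polymatroid `h`. -/
def IsVamosConfig {α : Type*} [DecidableEq α] (h : Finset α → ℝ)
    (L₀ L₁ L₂ L₃ : Finset α) : Prop :=
  h L₀ = 2 ∧ h L₁ = 2 ∧ h L₂ = 2 ∧ h L₃ = 2 ∧
  h (L₀ ∪ L₁) = 3 ∧ h (L₀ ∪ L₂) = 3 ∧ h (L₁ ∪ L₂) = 3 ∧
  h (L₁ ∪ L₃) = 3 ∧ h (L₂ ∪ L₃) = 3 ∧ h (L₀ ∪ L₃) = 4 ∧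
  h (L₀ ∪ L₁ ∪ L₂) = 4 ∧ h (L₀ ∪ L₁ ∪ L₃) = 4 ∧
  h (L₀ ∪ L₂ ∪ L₃) = 4 ∧ h (L₁ ∪ L₂ ∪ L₃) = 4 ∧
  h (L₀ ∪ L₁ ∪ L₂ ∪ L₃) = 4

/-- The points of the affine plane over `F₃`. -/
abbrev Pt := ZMod 3 × ZMod 3

/-- The horizontal line `A_i = {(x, i) : x ∈ F₃}`. -/
def lineA (i : ZMod 3) : Finset Pt := Finset.univ.image (fun x => (x, i))

/-- The vertical line `B_j = {(j, y) : y ∈ F₃}`. -/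
def lineB (j : ZMod 3) : Finset Pt := Finset.univ.image (fun y => (j, y))

/-- The line `C_i = {(x, y) : x − y = i}`. -/
def lineC (i : ZMod 3) : Finset Pt := Finset.univ.filter (fun p => p.1 - p.2 = i)

/-- The line `D_j = {(x, y) : x + y = j}`. -/
def lineD (j : ZMod 3) : Finset Pt := Finset.univ.filter (fun p => p.1 + p.2 = j)

/-- For every TTT matroid of the second kind containing the five listed
circuit-hyperplanes, the contraction by the point `(1,1)` contains a Vámos
configuration; in particular such matroids are not almost entropic. -/
theorem stmt_19 (C : Finset (Finset Pt))
    (hcard : ∀ S ∈ C, S.card = 5)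
    (hmeet : ∀ S ∈ C, ∀ T ∈ C, S ≠ T → (S ∩ T).card ≤ 3)
    (hAB : ∀ i j : ZMod 3, (i, j) ≠ ((0 : ZMod 3), (0 : ZMod 3)) → lineA i ∪ lineB j ∈ C)
    (h1 : lineC 0 ∪ lineD (-1) ∈ C) (h2 : lineC 0 ∪ lineD 0 ∈ C)
    (h3 : lineC 0 ∪ lineD 1 ∈ C) (h4 : lineA 1 ∪ lineB 1 ∈ C)
    (h5 : ((lineA 0 ∪ lineB 0) \ {((0 : ZMod 3), (0 : ZMod 3))}) ∪
      {((1 : ZMod 3), (1 : ZMod 3))} ∈ C)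
    (f : Finset Pt → ℝ)
    (hf : ∀ X : Finset Pt, f X = if X ∈ C then (4 : ℝ) else (min X.card 5 : ℕ))
    (h : Finset Pt → ℝ)
    (hh : ∀ X : Finset Pt, h X = f (X ∪ {((1 : ZMod 3), (1 : ZMod 3))}) - 1) :
    IsVamosConfig h
      {((0 : ZMod 3), (-1 : ZMod 3)), ((-1 : ZMod 3), (0 : ZMod 3))}
      {((0 : ZMod 3), (1 : ZMod 3)), ((1 : ZMod 3), (0 : ZMod 3))}
      {((-1 : ZMod 3), (-1 : ZMod 3)), ((0 : ZMod 3), (0 : ZMod 3))}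
      {((1 : ZMod 3), (-1 : ZMod 3)), ((-1 : ZMod 3), (1 : ZMod 3))} := by
  have mem3 : ∀ X : Finset Pt, X ∪ {((1 : ZMod 3), (1 : ZMod 3))} ∈ C → h X = 3 := by
    intro X hm
    rw [hh, hf, if_pos hm]; norm_num
  have small2 : ∀ X : Finset Pt, (X ∪ {((1 : ZMod 3), (1 : ZMod 3))}).card = 3 → h X = 2 := by
    intro X hc
    have hn : X ∪ {((1 : ZMod 3), (1 : ZMod 3))} ∉ C := fun hm => by
      have := hcard _ hm; omega
    rw [hh, hf, if_neg hn, hc]; norm_num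
  have big4 : ∀ X : Finset Pt, 6 ≤ (X ∪ {((1 : ZMod 3), (1 : ZMod 3))}).card → h X = 4 := by
    intro X hc
    have hn : X ∪ {((1 : ZMod 3), (1 : ZMod 3))} ∉ C := fun hm => by
      have := hcard _ hm; omega
    have hmin : min (X ∪ {((1 : ZMod 3), (1 : ZMod 3))}).card 5 = 5 := by omega
    rw [hh, hf, if_neg hn, hmin]; norm_num
  have notm4 : ∀ X : Finset Pt, X ∪ {((1 : ZMod 3), (1 : ZMod 3))} ∉ C →
      (X ∪ {((1 : ZMod 3), (1 : ZMod 3))}).card = 5 → h X = 4 := by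
    intro X hn hc
    rw [hh, hf, if_neg hn, hc]; norm_num
  refine ⟨small2 _ (by decide), small2 _ (by decide), small2 _ (by decide), small2 _ (by decide),
    mem3 _ (by convert h5 using 1; decide),
    mem3 _ (by convert h1 using 1; decide),
    mem3 _ (by convert h3 using 1; decide),
    mem3 _ (by convert h4 using 1; decide),
    mem3 _ (by convert h2 using 1; decide),
    notm4 _ ?_ (by decide),
    big4 _ (by decide), big4 _ (by decide), big4 _ (by decide), big4 _ (by decide),
    big4 _ (by decide)⟩
  intro hm
  have hT := hAB (-1) (-1) (by decide)
  have hne : ({((0 : ZMod 3), (-1 : ZMod 3)), ((-1 : ZMod 3), (0 : ZMod 3))} : Finset Pt) ∪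
      {((1 : ZMod 3), (-1 : ZMod 3)), ((-1 : ZMod 3), (1 : ZMod 3))} ∪
      {((1 : ZMod 3), (1 : ZMod 3))} ≠ lineA (-1) ∪ lineB (-1) := by decide
  exact absurd (hmeet _ hm _ hT hne) (by decide)
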